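/- Let M ≥ 2 and let f(x)=λx^M with 0<|λ|<1, and a with 0<|a|<|λ|. If a nonzero power series G = Σ g_I x^I over the valuation ring vanishes at (f^{t_1}(a),…,f^{t_n}(a)), then there exist distinct multi-indices I ≠ J such that Σ_{i=1}^n (I_i−J_i)·M^{t_i}·[v(a)+v(λ)/(M−1)] = v(g_J)−v(g_I)+(|J|−|I|)·v(λ)/(1−M), where v is the additive valuation. -/

import Mathlib

open Filter in

lemma two_equal_norms {ι : Type*} {K : Type*} [NontriviallyNormedField K]
    [IsUltrametricDist K] [CompleteSpace K]
    {h : ι → K} (hten : Tendsto (fun i => ‖h i‖) cofinite (nhds 0))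
    (hsum : ∑' i, h i = 0) {i0 : ι} (hi0 : h i0 ≠ 0) :
    ∃ i j, i ≠ j ∧ h i ≠ 0 ∧ h j ≠ 0 ∧ ‖h i‖ = ‖h j‖ := by
  classical
  have hsummable : Summable h := by
    apply NonarchimedeanAddGroup.summable_of_tendsto_cofinite_zero
    rwa [← tendsto_zero_iff_norm_tendsto_zero] at hten
  have hfin : ∀ ε : ℝ, 0 < ε → {i | ε ≤ ‖h i‖}.Finite := by
    intro ε hε
    have h2 : ∀ᶠ i in cofinite, ‖h i‖ < ε := hten.eventually (eventually_lt_nhds hε)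
    rw [Filter.eventually_cofinite] at h2
    convert h2 using 1
    ext i; simp [not_lt]
  set ε := ‖h i0‖ with hεdef
  have hε : 0 < ε := norm_pos_iff.mpr hi0
  set T := (hfin ε hε).toFinset with hT
  have hi0T : i0 ∈ T := by simp [hT, Set.Finite.mem_toFinset, hεdef]
  obtain ⟨im, himT, hmax⟩ := T.exists_max_image (fun i => ‖h i‖) ⟨i0, hi0T⟩
  set m := ‖h im‖ with hm
  have hεm : ε ≤ m := hmax i0 hi0T
  have hmpos : 0 < m := lt_of_lt_of_le hε hεm
  have him0 : h im ≠ 0 := norm_pos_iff.mp hmpos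
  have hall : ∀ i, ‖h i‖ ≤ m := by
    intro i
    by_cases hi : i ∈ T
    · exact hmax i hi
    · have : ¬ ε ≤ ‖h i‖ := by simpa [hT, Set.Finite.mem_toFinset] using hi
      linarith [not_le.mp this]
  by_cases hex : ∃ j, j ≠ im ∧ ‖h j‖ = m
  · obtain ⟨j, hj, hjm⟩ := hex
    exact ⟨im, j, (Ne.symm hj), him0, norm_pos_iff.mp (hjm ▸ hmpos), hjm.symm⟩
  push_neg at hex
  exfalso
  have hlt : ∀ j, j ≠ im → ‖h j‖ < m := fun j hj => lt_of_le_of_ne (hall j) (hex j hj)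
  set T2 := ((hfin (ε/2) (by linarith)).toFinset).erase im with hT2
  set C : ℝ := max (ε/2) ((T2.sup fun j => ‖h j‖₊ : NNReal) : ℝ) with hC
  have hCm : C < m := by
    apply max_lt (by linarith)
    have : T2.sup (fun j => ‖h j‖₊) < ‖h im‖₊ := by
      rw [Finset.sup_lt_iff (by simpa using him0)]
      intro j hj
      have hjne : j ≠ im := Finset.ne_of_mem_erase hj
      have := hlt j hjne
      simpa [← NNReal.coe_lt_coe] using this
    simpa [← NNReal.coe_lt_coe] using this
  have hbound : ∀ j, ‖(if j = im then 0 else h j)‖ ≤ C := by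
    intro j
    by_cases hj : j = im
    · simp only [if_pos hj, norm_zero]; positivity
    · simp only [if_neg hj]
      by_cases hj2 : ε/2 ≤ ‖h j‖
      · have hjT2 : j ∈ T2 := by
          rw [hT2, Finset.mem_erase]
          exact ⟨hj, by simp [Set.Finite.mem_toFinset, hj2]⟩
        have : ‖h j‖₊ ≤ T2.sup (fun j => ‖h j‖₊) := Finset.le_sup (f := fun j => ‖h j‖₊) hjT2
        calc ‖h j‖ ≤ ((T2.sup fun j => ‖h j‖₊ : NNReal) : ℝ) := by exact_mod_cast this
          _ ≤ C := le_max_right _ _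
      · exact le_trans (le_of_lt (not_le.mp hj2)) (le_max_left _ _)
  have heq : ∑' i, h i = h im + ∑' j, (if j = im then 0 else h j) :=
    hsummable.tsum_eq_add_tsum_ite im
  have : ‖h im‖ ≤ C := by
    have h1 : h im = -∑' j, (if j = im then 0 else h j) := by
      rw [hsum] at heq
      exact eq_neg_of_add_eq_zero_left heq.symm
    rw [h1, norm_neg]
    exact IsUltrametricDist.norm_tsum_le_of_forall_le_of_nonneg
      (le_trans (by positivity) (le_max_left (ε/2) _)) hbound
  linarith



/-- The (real-valued) additive valuation associated to the norm: `v(x) = -log ‖x‖`. -/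
noncomputable def addVal {K : Type*} [NontriviallyNormedField K] (x : K) : ℝ :=
  -Real.log ‖x‖

/-- superattracting case, `f(x) = λx^M` with `M ≥ 2`: if a
nonzero power series `G = ∑ g_I x^I` over the valuation ring vanishes at the
orbit point `(f^{t₁}(a),…,f^{t_n}(a))`, then there are distinct multi-indices
`I ≠ J` with
`∑ (I_i−J_i)·M^{t_i}·[v(a)+v(λ)/(M−1)] = v(g_J)−v(g_I)+(|J|−|I|)·v(λ)/(1−M)`. -/
theorem orbit_relation_linear_equation_superattracting
    {K : Type*} [NontriviallyNormedField K] [IsUltrametricDist K] [CompleteSpace K]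
    (M : ℕ) (hM : 2 ≤ M)
    (lam a : K) (hl0 : 0 < ‖lam‖) (hl1 : ‖lam‖ < 1)
    (ha0 : 0 < ‖a‖) (ha : ‖a‖ < ‖lam‖)
    (F : K → K) (hF : ∀ x, F x = lam * x ^ M)
    (n : ℕ) (g : (Fin n → ℕ) → K) (hg : ∀ I, ‖g I‖ ≤ 1)
    (hten : Filter.Tendsto (fun I => ‖g I‖) Filter.cofinite (nhds 0))
    (hGne : ∃ I, g I ≠ 0)
    (t : Fin n → ℕ)
    (hzero : ∑' I : Fin n → ℕ, g I * ∏ i, (F^[t i] a) ^ I i = 0) :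
    ∃ I J : Fin n → ℕ, I ≠ J ∧ g I ≠ 0 ∧ g J ≠ 0 ∧
      ∑ i, ((I i : ℝ) - (J i : ℝ)) * (M : ℝ) ^ t i *
          (addVal a + addVal lam / ((M : ℝ) - 1))
        = addVal (g J) - addVal (g I) +
          ((∑ i, (J i : ℝ)) - ∑ i, (I i : ℝ)) * (addVal lam / (1 - (M : ℝ))) := by
  classical
  have hane : a ≠ 0 := norm_pos_iff.mp ha0
  have hlamne : lam ≠ 0 := norm_pos_iff.mp hl0
  have hM1 : (M : ℝ) - 1 ≠ 0 := by
    have : (2 : ℝ) ≤ (M : ℝ) := by exact_mod_cast hM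
    linarith
  have hM1' : 1 - (M : ℝ) ≠ 0 := by
    have : (2 : ℝ) ≤ (M : ℝ) := by exact_mod_cast hM
    linarith
  -- iterates are nonzero
  have hcne : ∀ s : ℕ, F^[s] a ≠ 0 := by
    intro s
    induction s with
    | zero => simpa using hane
    | succ s ih =>
      rw [Function.iterate_succ_apply', hF]
      exact mul_ne_zero hlamne (pow_ne_zero _ ih)
  -- iterates have norm < 1
  have hclt1 : ∀ s : ℕ, ‖F^[s] a‖ < 1 := by
    intro s
    induction s with
    | zero => simpa using lt_trans ha hl1
    | succ s ih =>
      rw [Function.iterate_succ_apply', hF, norm_mul, norm_pow]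
      have h1 : ‖F^[s] a‖ ^ M ≤ 1 := pow_le_one₀ (norm_nonneg _) (le_of_lt ih)
      nlinarith [norm_nonneg (F^[s] a)]
  -- valuation of iterates
  have hlog : ∀ s : ℕ, Real.log ‖F^[s] a‖
      = (M : ℝ) ^ s * Real.log ‖a‖ + (((M : ℝ) ^ s - 1) / ((M : ℝ) - 1)) * Real.log ‖lam‖ := by
    intro s
    induction s with
    | zero => simp
    | succ s ih =>
      rw [Function.iterate_succ_apply', hF, norm_mul, norm_pow,
        Real.log_mul (ne_of_gt hl0) (pow_ne_zero _ (ne_of_gt (norm_pos_iff.mpr (hcne s)))),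
        Real.log_pow, ih, pow_succ]
      field_simp
      ring
  -- the series terms
  set h : (Fin n → ℕ) → K := fun I => g I * ∏ i, (F^[t i] a) ^ I i with hh
  have hbnd : ∀ I, ‖h I‖ ≤ ‖g I‖ := by
    intro I
    rw [hh]
    simp only
    rw [norm_mul]
    apply mul_le_of_le_one_right (norm_nonneg _)
    rw [norm_prod]
    apply Finset.prod_le_one
    · intro i _; positivity
    · intro i _
      rw [norm_pow]
      exact pow_le_one₀ (norm_nonneg _) (le_of_lt (hclt1 (t i)))
  have htenh : Filter.Tendsto (fun I => ‖h I‖) Filter.cofinite (nhds 0) :=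
    squeeze_zero (fun I => norm_nonneg _) hbnd hten
  obtain ⟨I0, hI0⟩ := hGne
  have hhI0 : h I0 ≠ 0 := by
    apply mul_ne_zero hI0
    exact Finset.prod_ne_zero_iff.mpr fun i _ => pow_ne_zero _ (hcne (t i))
  obtain ⟨I, J, hIJ, hhI, hhJ, hnormeq⟩ := two_equal_norms htenh hzero hhI0
  have hgI : g I ≠ 0 := fun h0 => hhI (by rw [hh]; simp [h0])
  have hgJ : g J ≠ 0 := fun h0 => hhJ (by rw [hh]; simp [h0])
  refine ⟨I, J, hIJ, hgI, hgJ, ?_⟩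
  -- log of a term
  have hval : ∀ (I : Fin n → ℕ), g I ≠ 0 →
      Real.log ‖h I‖ = Real.log ‖g I‖ + ∑ i, (I i : ℝ) * Real.log ‖F^[t i] a‖ := by
    intro I hI
    rw [hh]
    simp only
    rw [norm_mul, norm_prod,
      Real.log_mul (ne_of_gt (norm_pos_iff.mpr hI))
        (by
          apply ne_of_gt
          apply Finset.prod_pos
          intro i _
          rw [norm_pow]
          exact pow_pos (norm_pos_iff.mpr (hcne (t i))) _),
      Real.log_prod (by
        intro i _
        rw [norm_pow]
        exact ne_of_gt (pow_pos (norm_pos_iff.mpr (hcne (t i))) _))]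
    simp [norm_pow, Real.log_pow]
  have key : Real.log ‖g I‖ + ∑ i, (I i : ℝ) * Real.log ‖F^[t i] a‖
      = Real.log ‖g J‖ + ∑ i, (J i : ℝ) * Real.log ‖F^[t i] a‖ := by
    rw [← hval I hgI, ← hval J hgJ, hnormeq]
  -- pointwise decomposition
  have e1 : ∑ i, ((I i : ℝ) - (J i : ℝ)) * (M : ℝ) ^ t i *
        (addVal a + addVal lam / ((M : ℝ) - 1))
      = ((∑ i, (J i : ℝ) * Real.log ‖F^[t i] a‖) - ∑ i, (I i : ℝ) * Real.log ‖F^[t i] a‖)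
        + ((∑ i, (J i : ℝ)) - ∑ i, (I i : ℝ)) * (Real.log ‖lam‖ / ((M : ℝ) - 1)) := by
    conv_rhs => rw [← Finset.sum_sub_distrib, ← Finset.sum_sub_distrib, Finset.sum_mul,
      ← Finset.sum_add_distrib]
    apply Finset.sum_congr rfl
    intro i _
    rw [hlog (t i)]
    unfold addVal
    field_simp
    ring
  rw [e1]
  have hdiv : addVal lam / (1 - (M : ℝ)) = Real.log ‖lam‖ / ((M : ℝ) - 1) := by
    unfold addVal
    field_simp
    ring
  rw [hdiv]
  have hkey2 : (∑ i, (J i : ℝ) * Real.log ‖F^[t i] a‖) - ∑ i, (I i : ℝ) * Real.log ‖F^[t i] a‖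
      = addVal (g J) - addVal (g I) := by
    unfold addVal
    linarith [key]
  rw [hkey2]
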